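/- Let k : ℝ^D × ℝ^D → ℝ be a bounded continuous function, let P be a probability measure on ℝ^D, and let (Q_n) be a sequence of probability measures on ℝ^D converging weakly (in distribution) to P. Then MMD²_k(Q_n, P) := ∫∫ k(y, y') dQ_n(y) dQ_n(y') − 2 ∫∫ k(y, x) dQ_n(y) dP(x) + ∫∫ k(x, x') dP(x) dP(x') converges to 0 as n → ∞. -/

import Mathlib

open MeasureTheory Real Filter
open scoped Topology
open BoundedContinuousFunction
open scoped ENNReal

namespace MMDAux

abbrev X (D : ℕ) := EuclideanSpace ℝ (Fin D)

section basics

variable {D : ℕ}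
variable (k : X D → X D → ℝ) (hk_cont : Continuous (Function.uncurry k))
  {M : ℝ} (hM : ∀ x y, |k x y| ≤ M)

include hk_cont

lemma cont_left (y : X D) : Continuous (k y) := by
  have h : (k y) = fun x => Function.uncurry k (y, x) := rfl
  rw [h]
  exact hk_cont.comp (continuous_const.prodMk continuous_id)

lemma cont_right (x : X D) : Continuous (fun y => k y x) := by
  have h : (fun y => k y x) = fun y => Function.uncurry k (y, x) := rfl
  rw [h]
  exact hk_cont.comp (continuous_id.prodMk continuous_const)

/-- `k y ·` as a bounded continuous function. -/
noncomputable def kL (y : X D) : X D →ᵇ ℝ :=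
  BoundedContinuousFunction.ofNormedAddCommGroup (k y) (cont_left k hk_cont y) M
    (fun x => by simpa [Real.norm_eq_abs] using hM y x)

lemma kL_coe (y : X D) : ⇑(kL k hk_cont hM y) = k y := rfl

lemma kL_apply (y x : X D) : kL k hk_cont hM y x = k y x := rfl

include hM in
lemma integrable_left (μ : Measure (X D)) [IsFiniteMeasure μ] (y : X D) :
    Integrable (k y) μ :=
  (kL k hk_cont hM y).integrable μ

include hM in
lemma cont_integral (μ : Measure (X D)) [IsFiniteMeasure μ] :
    Continuous (fun y => ∫ x, k y x ∂μ) := by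
  apply MeasureTheory.continuous_of_dominated (bound := fun _ => M)
  · exact fun y => (cont_left k hk_cont y).aestronglyMeasurable
  · exact fun y => Filter.Eventually.of_forall fun x => by
      simpa [Real.norm_eq_abs] using hM y x
  · exact integrable_const M
  · exact Filter.Eventually.of_forall fun x => cont_right k hk_cont x

include hM in
lemma abs_integral_le (μ : Measure (X D)) [IsProbabilityMeasure μ] (y : X D) :
    |∫ x, k y x ∂μ| ≤ M := by
  calc |∫ x, k y x ∂μ| ≤ ∫ x, |k y x| ∂μ := by
        simpa [Real.norm_eq_abs] using
          norm_integral_le_integral_norm (μ := μ) (f := k y)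
    _ ≤ ∫ _x, M ∂μ :=
        integral_mono ((integrable_left k hk_cont hM μ y).abs) (integrable_const M)
          fun x => hM y x
    _ = M := by simp

/-- `y ↦ ∫ k y dμ` as a bounded continuous function. -/
noncomputable def intK (μ : Measure (X D)) [IsProbabilityMeasure μ] : X D →ᵇ ℝ :=
  BoundedContinuousFunction.ofNormedAddCommGroup (fun y => ∫ x, k y x ∂μ)
    (cont_integral k hk_cont hM μ) M
    (fun y => by simpa [Real.norm_eq_abs] using abs_integral_le k hk_cont hM μ y)

lemma intK_coe (μ : Measure (X D)) [IsProbabilityMeasure μ] :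
    ⇑(intK k hk_cont hM μ) = fun y => ∫ x, k y x ∂μ := rfl

lemma intK_apply (μ : Measure (X D)) [IsProbabilityMeasure μ] (y : X D) :
    intK k hk_cont hM μ y = ∫ x, k y x ∂μ := rfl

end basics

section tight

variable {D : ℕ}

lemma compl_small {μ : Measure (X D)} [IsProbabilityMeasure μ] {G : Set (X D)}
    (hG : MeasurableSet G) {ε : ℝ≥0∞} (h : 1 - ε < μ G) : μ Gᶜ ≤ ε := by
  rw [prob_compl_eq_one_sub hG]
  rw [tsub_le_iff_right]
  exact tsub_le_iff_left.mp h.le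

lemma tight (P : ProbabilityMeasure (X D)) (Q : ℕ → ProbabilityMeasure (X D))
    (hQP : Tendsto Q atTop (𝓝 P)) {ε : ℝ} (hε : 0 < ε) :
    ∃ R : ℝ, (((P : Measure (X D)) (Metric.closedBall 0 R)ᶜ).toReal ≤ ε ∧
      ∀ᶠ n in atTop, (((Q n : Measure (X D))) (Metric.closedBall 0 R)ᶜ).toReal ≤ ε) := by
  set ε' : ℝ≥0∞ := ENNReal.ofReal ε with hε'def
  have hε'0 : ε' ≠ 0 := by simpa [hε'def] using hε
  have hlt1 : (1 : ℝ≥0∞) - ε' < 1 :=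
    ENNReal.sub_lt_self ENNReal.one_ne_top one_ne_zero hε'0
  have hmono : Monotone (fun m : ℕ => Metric.ball (0 : X D) m) := by
    intro a b hab
    exact Metric.ball_subset_ball (by exact_mod_cast hab)
  have huniv : (⋃ m : ℕ, Metric.ball (0 : X D) m) = Set.univ := by
    ext x
    simp only [Set.mem_iUnion, Set.mem_univ, iff_true, Metric.mem_ball]
    obtain ⟨m, hm⟩ := exists_nat_gt (dist x 0)
    exact ⟨m, hm⟩
  have htend := tendsto_measure_iUnion_atTop (μ := (P : Measure (X D))) hmono
  rw [huniv, measure_univ] at htend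
  have hev := htend.eventually (eventually_gt_nhds hlt1)
  obtain ⟨m, hm⟩ := hev.exists
  refine ⟨m, ?_, ?_⟩
  · have hPc : (P : Measure (X D)) (Metric.ball (0 : X D) m)ᶜ ≤ ε' :=
      compl_small Metric.isOpen_ball.measurableSet hm
    have hsub : (Metric.closedBall (0 : X D) (m : ℝ))ᶜ ⊆ (Metric.ball (0 : X D) m)ᶜ :=
      Set.compl_subset_compl.mpr Metric.ball_subset_closedBall
    exact ENNReal.toReal_le_of_le_ofReal hε.le ((measure_mono hsub).trans hPc)
  · have hlim := ProbabilityMeasure.le_liminf_measure_open_of_tendsto hQP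
      (Metric.isOpen_ball (x := (0 : X D)) (ε := (m : ℝ)))
    have hlt : (1 : ℝ≥0∞) - ε' < atTop.liminf
        (fun n => (Q n : Measure (X D)) (Metric.ball (0 : X D) m)) :=
      lt_of_lt_of_le hm hlim
    filter_upwards [eventually_lt_of_lt_liminf hlt] with n hn
    have hQc : (Q n : Measure (X D)) (Metric.ball (0 : X D) m)ᶜ ≤ ε' :=
      compl_small Metric.isOpen_ball.measurableSet hn
    have hsub : (Metric.closedBall (0 : X D) (m : ℝ))ᶜ ⊆ (Metric.ball (0 : X D) m)ᶜ :=
      Set.compl_subset_compl.mpr Metric.ball_subset_closedBall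
    exact ENNReal.toReal_le_of_le_ofReal hε.le ((measure_mono hsub).trans hQc)

end tight

section bound

variable {D : ℕ}

lemma abs_integral_le_of_bound (μ : Measure (X D)) [IsProbabilityMeasure μ]
    {h : X D → ℝ} (hint : Integrable h μ) {K : Set (X D)} (hKm : MeasurableSet K)
    {a b : ℝ} (ha : 0 ≤ a) (hbd : ∀ y ∈ K, |h y| ≤ a) (hglob : ∀ y, |h y| ≤ b) :
    |∫ y, h y ∂μ| ≤ a + b * (μ Kᶜ).toReal := by
  have hφint : Integrable (fun y => a + b * Kᶜ.indicator (fun _ => (1:ℝ)) y) μ :=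
    (integrable_const a).add (((integrable_const (1:ℝ)).indicator hKm.compl).const_mul b)
  have hpt : ∀ y, |h y| ≤ a + b * Kᶜ.indicator (fun _ => (1:ℝ)) y := by
    intro y
    by_cases hy : y ∈ K
    · have hind : Kᶜ.indicator (fun _ => (1:ℝ)) y = 0 :=
        Set.indicator_of_notMem (by simpa using hy) _
      rw [hind]
      simpa using hbd y hy
    · have hind : Kᶜ.indicator (fun _ => (1:ℝ)) y = 1 :=
        Set.indicator_of_mem (by simpa using hy) _
      rw [hind]
      have := hglob y
      linarith
  calc |∫ y, h y ∂μ| ≤ ∫ y, |h y| ∂μ := by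
        simpa [Real.norm_eq_abs] using norm_integral_le_integral_norm (f := h) (μ := μ)
    _ ≤ ∫ y, (a + b * Kᶜ.indicator (fun _ => (1:ℝ)) y) ∂μ :=
        integral_mono hint.abs hφint hpt
    _ = a + b * (μ Kᶜ).toReal := by
        rw [integral_add (integrable_const a)
          (((integrable_const (1:ℝ)).indicator hKm.compl).const_mul b),
          integral_const, integral_const_mul,
          integral_indicator_const (1:ℝ) hKm.compl]
        simp [Measure.real]

end bound

section key

variable {D : ℕ}
variable (k : X D → X D → ℝ) (hk_cont : Continuous (Function.uncurry k))
  {M : ℝ} (hM : ∀ x y, |k x y| ≤ M)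

include hk_cont hM

lemma key (hM0 : 0 ≤ M) (P : ProbabilityMeasure (X D)) (Q : ℕ → ProbabilityMeasure (X D))
    (hQP : Tendsto Q atTop (𝓝 P)) :
    Tendsto (fun n => ∫ y, ∫ x, k y x ∂(Q n : Measure (X D)) ∂(Q n : Measure (X D)))
      atTop (𝓝 (∫ y, ∫ x, k y x ∂(P : Measure (X D)) ∂(P : Measure (X D)))) := by
  rw [Metric.tendsto_atTop]
  intro ε hε
  rw [← eventually_atTop]
  set ε' : ℝ := ε / (8 * (M + 1)) with hε'def
  have hε' : 0 < ε' := by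
    apply div_pos hε
    nlinarith
  have hMε' : 0 ≤ M * ε' := mul_nonneg hM0 hε'.le
  obtain ⟨R, hPK, hQK⟩ := tight P Q hQP hε'
  set K := Metric.closedBall (0 : X D) R with hKdef
  have hKc : IsCompact K := isCompact_closedBall _ _
  have hKm : MeasurableSet K := measurableSet_closedBall
  have hUC := ((hKc.prod hKc).uniformContinuousOn_of_continuous hk_cont.continuousOn)
  rw [Metric.uniformContinuousOn_iff] at hUC
  obtain ⟨δ, hδ0, hδ⟩ := hUC ε' hε'
  obtain ⟨t, htK, htfin, hcover⟩ := hKc.elim_finite_subcover_image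
    (fun c (_ : c ∈ K) => Metric.isOpen_ball (x := c) (ε := δ))
    (fun y hy => Set.mem_biUnion hy (Metric.mem_ball_self hδ0))
  have hcenter : ∀ᶠ n in atTop, ∀ c ∈ t,
      |(∫ x, k c x ∂(Q n : Measure (X D))) - ∫ x, k c x ∂(P : Measure (X D))| < ε' := by
    rw [eventually_all_finite htfin]
    intro c _
    have h1 := (ProbabilityMeasure.tendsto_iff_forall_integral_tendsto.mp hQP)
      (kL k hk_cont hM c)
    have h2 := Metric.tendsto_nhds.mp h1 ε' hε'
    simpa [kL_coe, Real.dist_eq] using h2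
  have hfconv : ∀ᶠ n in atTop,
      |(∫ y, ∫ x, k y x ∂(P : Measure (X D)) ∂(Q n : Measure (X D)))
        - ∫ y, ∫ x, k y x ∂(P : Measure (X D)) ∂(P : Measure (X D))| < ε' := by
    have h1 := (ProbabilityMeasure.tendsto_iff_forall_integral_tendsto.mp hQP)
      (intK k hk_cont hM (P : Measure (X D)))
    have h2 := Metric.tendsto_nhds.mp h1 ε' hε'
    simpa [intK_coe, Real.dist_eq] using h2
  filter_upwards [hcenter, hfconv, hQK] with n hc hf hQn
  set μ := (Q n : Measure (X D)) with hμdef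
  set ν := (P : Measure (X D)) with hνdef
  -- pointwise bound on K
  have hpt : ∀ y ∈ K, |(∫ x, k y x ∂μ) - ∫ x, k y x ∂ν| ≤ 3 * ε' + 4 * (M * ε') := by
    intro y hy
    obtain ⟨c, hct, hyc⟩ : ∃ c ∈ t, y ∈ Metric.ball c δ := by
      simpa using hcover hy
    have hcK : c ∈ K := htK hct
    have hucb : ∀ x ∈ K, |k y x - k c x| ≤ ε' := by
      intro x hx
      have hd : dist ((y, x) : X D × X D) (c, x) < δ := by
        rw [Prod.dist_eq, dist_self]
        exact max_lt (Metric.mem_ball.mp hyc) hδ0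
      have h3 := hδ (y, x) (Set.mk_mem_prod hy hx) (c, x) (Set.mk_mem_prod hcK hx) hd
      rw [Real.dist_eq] at h3
      exact h3.le
    have hglob2 : ∀ x, |k y x - k c x| ≤ 2 * M := by
      intro x
      calc |k y x - k c x| ≤ |k y x| + |k c x| := abs_sub _ _
        _ ≤ 2 * M := by linarith [hM y x, hM c x]
    have hside : ∀ (ρ : Measure (X D)), IsProbabilityMeasure ρ →
        (ρ Kᶜ).toReal ≤ ε' → |(∫ x, k y x ∂ρ) - ∫ x, k c x ∂ρ| ≤ ε' + 2 * (M * ε') := by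
      intro ρ hρ hρK
      rw [← integral_sub (integrable_left k hk_cont hM ρ y) (integrable_left k hk_cont hM ρ c)]
      have hb := abs_integral_le_of_bound ρ
        ((integrable_left k hk_cont hM ρ y).sub (integrable_left k hk_cont hM ρ c))
        hKm hε'.le hucb hglob2
      refine hb.trans ?_
      have h4 : (2 * M) * (ρ Kᶜ).toReal ≤ 2 * M * ε' :=
        mul_le_mul_of_nonneg_left hρK (by linarith)
      linarith
    have hQside := hside μ inferInstance hQn
    have hPside := hside ν inferInstance hPK
    have hcent := hc c hct
    have htri : |(∫ x, k y x ∂μ) - ∫ x, k y x ∂ν|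
        ≤ |(∫ x, k y x ∂μ) - ∫ x, k c x ∂μ| + |(∫ x, k c x ∂μ) - ∫ x, k c x ∂ν|
          + |(∫ x, k c x ∂ν) - ∫ x, k y x ∂ν| := by
      have t1 := abs_sub_le (∫ x, k y x ∂μ) (∫ x, k c x ∂ν) (∫ x, k y x ∂ν)
      have t2 := abs_sub_le (∫ x, k y x ∂μ) (∫ x, k c x ∂μ) (∫ x, k c x ∂ν)
      linarith
    have hPside' : |(∫ x, k c x ∂ν) - ∫ x, k y x ∂ν| ≤ ε' + 2 * (M * ε') := by
      rw [abs_sub_comm]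
      exact hPside
    linarith
  -- integrability of the two inner-integral functions w.r.t. μ
  have hgint : Integrable (fun y => ∫ x, k y x ∂μ) μ := (intK k hk_cont hM μ).integrable μ
  have hfint : Integrable (fun y => ∫ x, k y x ∂ν) μ := (intK k hk_cont hM ν).integrable μ
  have hglob3 : ∀ y, |(∫ x, k y x ∂μ) - ∫ x, k y x ∂ν| ≤ 2 * M := by
    intro y
    calc |(∫ x, k y x ∂μ) - ∫ x, k y x ∂ν| ≤ |∫ x, k y x ∂μ| + |∫ x, k y x ∂ν| := abs_sub _ _
      _ ≤ 2 * M := by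
          linarith [abs_integral_le k hk_cont hM μ y, abs_integral_le k hk_cont hM ν y]
  have houter : |(∫ y, ∫ x, k y x ∂μ ∂μ) - ∫ y, ∫ x, k y x ∂ν ∂μ|
      ≤ (3 * ε' + 4 * (M * ε')) + 2 * M * (μ Kᶜ).toReal := by
    rw [← integral_sub hgint hfint]
    exact abs_integral_le_of_bound μ (hgint.sub hfint) hKm
      (by linarith) hpt hglob3
  have h2Mμ : 2 * M * (μ Kᶜ).toReal ≤ 2 * (M * ε') :=
    le_trans (mul_le_mul_of_nonneg_left hQn (by linarith)) (by linarith)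
  have htri2 := abs_sub_le (∫ y, ∫ x, k y x ∂μ ∂μ) (∫ y, ∫ x, k y x ∂ν ∂μ)
    (∫ y, ∫ x, k y x ∂ν ∂ν)
  have hEq : 8 * (M + 1) * ε' = ε := by
    rw [hε'def]
    field_simp
  rw [Real.dist_eq]
  linarith

end key

end MMDAux

/-- The analytic core of the paper's Theorem 4: for a bounded continuous kernel `k`,
weak convergence `Qₙ → P` implies `MMD²_k(Qₙ, P) → 0`. -/
theorem stmt_8 {D : ℕ}
    (k : EuclideanSpace ℝ (Fin D) → EuclideanSpace ℝ (Fin D) → ℝ)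
    (hk_cont : Continuous (Function.uncurry k))
    (hk_bdd : ∃ M, ∀ x y, |k x y| ≤ M)
    (P : ProbabilityMeasure (EuclideanSpace ℝ (Fin D)))
    (Q : ℕ → ProbabilityMeasure (EuclideanSpace ℝ (Fin D)))
    (hQP : Tendsto Q atTop (𝓝 P)) :
    Tendsto (fun n =>
        (∫ y, ∫ y', k y y' ∂(Q n : Measure _) ∂(Q n : Measure _))
          - 2 * (∫ y, ∫ x, k y x ∂(P : Measure _) ∂(Q n : Measure _))
          + ∫ x, ∫ x', k x x' ∂(P : Measure _) ∂(P : Measure _))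
      atTop (𝓝 0) := by
  obtain ⟨M₀, hM₀⟩ := hk_bdd
  have hM : ∀ x y, |k x y| ≤ max M₀ 0 := fun x y => (hM₀ x y).trans (le_max_left _ _)
  have hM0 : (0 : ℝ) ≤ max M₀ 0 := le_max_right _ _
  have hT1 := MMDAux.key k hk_cont hM hM0 P Q hQP
  have hT2 : Tendsto (fun n => ∫ y, ∫ x, k y x
        ∂(P : Measure (EuclideanSpace ℝ (Fin D))) ∂(Q n : Measure (EuclideanSpace ℝ (Fin D))))
      atTop (𝓝 (∫ y, ∫ x, k y x ∂(P : Measure (EuclideanSpace ℝ (Fin D)))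
        ∂(P : Measure (EuclideanSpace ℝ (Fin D))))) := by
    have h1 := (MeasureTheory.ProbabilityMeasure.tendsto_iff_forall_integral_tendsto.mp hQP)
      (MMDAux.intK k hk_cont hM (P : Measure (EuclideanSpace ℝ (Fin D))))
    simpa [MMDAux.intK_coe] using h1
  set C := ∫ y, ∫ x, k y x ∂(P : Measure (EuclideanSpace ℝ (Fin D)))
    ∂(P : Measure (EuclideanSpace ℝ (Fin D))) with hC
  have hcomb := (hT1.sub (hT2.const_mul 2)).add (tendsto_const_nhds (x := C)
    (f := atTop (α := ℕ)))
  have hzero : C - 2 * C + C = 0 := by ring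
  rw [hzero] at hcomb
  exact hcomb
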